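/- Suppose that for every m ∈ ℝ, V_m is a bounded function on Δ satisfying the Bellman equation for subsidy m. Then for every fixed ω ∈ Δ, the map m ↦ V_m(ω) is convex on ℝ, nondecreasing, and Lipschitz continuous with constant 1/(1−β): for all m₁, m₂ ∈ ℝ, |V_{m₁}(ω) − V_{m₂}(ω)| ≤ |m₁ − m₂|/(1−β). -/

import Mathlib

open Matrix

lemma stdSimplex_nonempty' (K : ℕ) (hK : 1 ≤ K) :
    (stdSimplex ℝ (Fin K)).Nonempty := by
  refine ⟨fun j => if j = ⟨0, hK⟩ then 1 else 0, fun j => ?_, ?_⟩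
  · dsimp only; split <;> norm_num
  · simp

lemma row_mem_stdSimplex (K : ℕ) (P : Matrix (Fin K) (Fin K) ℝ)
    (hPnn : ∀ i j, 0 ≤ P i j) (hProw : ∀ i, ∑ j, P i j = 1) (k : Fin K) :
    P k ∈ stdSimplex ℝ (Fin K) := ⟨fun j => hPnn k j, hProw k⟩

lemma vecMul_mem_stdSimplex (K : ℕ) (P : Matrix (Fin K) (Fin K) ℝ)
    (hPnn : ∀ i j, 0 ≤ P i j) (hProw : ∀ i, ∑ j, P i j = 1)
    {ω : Fin K → ℝ} (hω : ω ∈ stdSimplex ℝ (Fin K)) :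
    ω ᵥ* P ∈ stdSimplex ℝ (Fin K) := by
  constructor
  · intro j
    simp only [Matrix.vecMul, dotProduct]
    exact Finset.sum_nonneg fun i _ => mul_nonneg (hω.1 i) (hPnn i j)
  · simp only [Matrix.vecMul, dotProduct]
    rw [Finset.sum_comm]
    calc ∑ i, ∑ j, ω i * P i j = ∑ i, ω i * ∑ j, P i j := by
          simp [Finset.mul_sum]
      _ = 1 := by simp [hProw, hω.2]

/-- Key contraction-type bound: if `g` is bounded above on the simplex and satisfies
a sub-Bellman inequality with slack `c`, then `g ≤ max 0 c / (1 - β)` on the simplex. -/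
lemma bellman_sup_bound (K : ℕ) (hK : 1 ≤ K)
    (P : Matrix (Fin K) (Fin K) ℝ)
    (hPnn : ∀ i j, 0 ≤ P i j) (hProw : ∀ i, ∑ j, P i j = 1)
    (β : ℝ) (hβ₀ : 0 < β) (hβ₁ : β < 1)
    (g : (Fin K → ℝ) → ℝ) (C : ℝ)
    (hgC : ∀ ω ∈ stdSimplex ℝ (Fin K), g ω ≤ C)
    (c : ℝ)
    (hstep : ∀ ω ∈ stdSimplex ℝ (Fin K),
      g ω ≤ max (β * ∑ k, ω k * g (P k)) (c + β * g (ω ᵥ* P))) :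
    ∀ ω ∈ stdSimplex ℝ (Fin K), g ω ≤ max 0 c / (1 - β) := by
  have h1β : (0:ℝ) < 1 - β := by linarith
  set S := sSup (g '' stdSimplex ℝ (Fin K)) with hSdef
  have hbdd : BddAbove (g '' stdSimplex ℝ (Fin K)) := by
    refine ⟨C, ?_⟩
    rintro _ ⟨ω, hω, rfl⟩
    exact hgC ω hω
  have hne : (g '' stdSimplex ℝ (Fin K)).Nonempty :=
    (stdSimplex_nonempty' K hK).image g
  have hle : ∀ ω ∈ stdSimplex ℝ (Fin K), g ω ≤ S :=
    fun ω hω => le_csSup hbdd ⟨ω, hω, rfl⟩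
  have key : ∀ ω ∈ stdSimplex ℝ (Fin K), g ω ≤ max 0 c + β * S := by
    intro ω hω
    refine (hstep ω hω).trans (max_le ?_ ?_)
    · have hsum : ∑ k, ω k * g (P k) ≤ S := by
        calc ∑ k, ω k * g (P k) ≤ ∑ k, ω k * S :=
              Finset.sum_le_sum fun k _ =>
                mul_le_mul_of_nonneg_left
                  (hle _ (row_mem_stdSimplex K P hPnn hProw k)) (hω.1 k)
          _ = S := by rw [← Finset.sum_mul, hω.2, one_mul]
      have : β * ∑ k, ω k * g (P k) ≤ β * S :=
        mul_le_mul_of_nonneg_left hsum hβ₀.le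
      have h0 : (0:ℝ) ≤ max 0 c := le_max_left 0 c
      linarith
    · have : g (ω ᵥ* P) ≤ S := hle _ (vecMul_mem_stdSimplex K P hPnn hProw hω)
      have hc : c ≤ max 0 c := le_max_right 0 c
      nlinarith
  have hS : S ≤ max 0 c + β * S := by
    refine csSup_le hne ?_
    rintro _ ⟨ω, hω, rfl⟩
    exact key ω hω
  have hSle : S ≤ max 0 c / (1 - β) := by
    rw [le_div_iff₀ h1β]
    nlinarith
  exact fun ω hω => (hle ω hω).trans hSle

/-- For a family of bounded Bellman solutions `V_m`, the map `m ↦ V_m(ω)` is, at each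
fixed `ω` in the simplex, convex, nondecreasing, and Lipschitz with constant `1/(1−β)`. -/
theorem bellman_value_in_subsidy (K : ℕ) (hK : 1 ≤ K)
    (P : Matrix (Fin K) (Fin K) ℝ)
    (hPnn : ∀ i j, 0 ≤ P i j) (hProw : ∀ i, ∑ j, P i j = 1)
    (B : Fin K → ℝ) (hB : ∀ i, 0 ≤ B i)
    (β : ℝ) (hβ₀ : 0 < β) (hβ₁ : β < 1)
    (V : ℝ → (Fin K → ℝ) → ℝ)
    (hbd : ∀ m : ℝ, ∃ C, ∀ ω ∈ stdSimplex ℝ (Fin K), |V m ω| ≤ C)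
    (hBell : ∀ m : ℝ, ∀ ω ∈ stdSimplex ℝ (Fin K),
      V m ω = max (ω ⬝ᵥ B + β * ∑ k, ω k * V m (P k)) (m + β * V m (ω ᵥ* P))) :
    ∀ ω ∈ stdSimplex ℝ (Fin K),
      ConvexOn ℝ Set.univ (fun m : ℝ => V m ω) ∧
      Monotone (fun m : ℝ => V m ω) ∧
      ∀ m₁ m₂ : ℝ, |V m₁ ω - V m₂ ω| ≤ |m₁ - m₂| / (1 - β) := by
  have h1β : (0:ℝ) < 1 - β := by linarith
  -- General difference bound: for any m₁ m₂,
  -- V m₁ ω - V m₂ ω ≤ max 0 (m₁ - m₂) / (1 - β) on the simplex.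
  have hdiff : ∀ m₁ m₂ : ℝ, ∀ ω ∈ stdSimplex ℝ (Fin K),
      V m₁ ω - V m₂ ω ≤ max 0 (m₁ - m₂) / (1 - β) := by
    intro m₁ m₂
    obtain ⟨C₁, hC₁⟩ := hbd m₁
    obtain ⟨C₂, hC₂⟩ := hbd m₂
    refine bellman_sup_bound K hK P hPnn hProw β hβ₀ hβ₁
      (fun ω => V m₁ ω - V m₂ ω) (C₁ + C₂) ?_ (m₁ - m₂) ?_
    · intro ω hω
      have h1 := abs_le.mp (hC₁ ω hω)
      have h2 := abs_le.mp (hC₂ ω hω)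
      linarith [h1.2, h2.1]
    · intro ω hω
      have e₁ := hBell m₁ ω hω
      have e₂ := hBell m₂ ω hω
      have hsum : β * ∑ k, ω k * V m₁ (P k) - β * ∑ k, ω k * V m₂ (P k)
          = β * ∑ k, ω k * (V m₁ (P k) - V m₂ (P k)) := by
        rw [← mul_sub, ← Finset.sum_sub_distrib]
        congr 1
        exact Finset.sum_congr rfl fun k _ => by ring
      rw [e₁, sub_le_iff_le_add]
      have h2A : ω ⬝ᵥ B + β * ∑ k, ω k * V m₂ (P k) ≤ V m₂ ω := by
        rw [e₂]; exact le_max_left _ _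
      have h2B : m₂ + β * V m₂ (ω ᵥ* P) ≤ V m₂ ω := by
        rw [e₂]; exact le_max_right _ _
      have hXl := le_max_left (β * ∑ k, ω k * (V m₁ (P k) - V m₂ (P k)))
        (m₁ - m₂ + β * (V m₁ (ω ᵥ* P) - V m₂ (ω ᵥ* P)))
      have hYr := le_max_right (β * ∑ k, ω k * (V m₁ (P k) - V m₂ (P k)))
        (m₁ - m₂ + β * (V m₁ (ω ᵥ* P) - V m₂ (ω ᵥ* P)))
      refine max_le ?_ ?_
      · linarith [hsum]
      · linarith
  intro ω hω
  refine ⟨?_, ?_, ?_⟩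
  · -- Convexity
    refine ⟨convex_univ, ?_⟩
    intro x _ y _ a b ha hb hab
    simp only [smul_eq_mul]
    obtain ⟨Cm, hCm⟩ := hbd (a * x + b * y)
    obtain ⟨Cx, hCx⟩ := hbd x
    obtain ⟨Cy, hCy⟩ := hbd y
    have hkey := bellman_sup_bound K hK P hPnn hProw β hβ₀ hβ₁
      (fun ω => V (a * x + b * y) ω - (a * V x ω + b * V y ω))
      (Cm + |a| * Cx + |b| * Cy) ?_ 0 ?_
    · have := hkey ω hω
      simp only [max_self, zero_div] at this
      linarith
    · intro ω' hω'
      have h1 := abs_le.mp (hCm ω' hω')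
      have h2 := abs_le.mp (hCx ω' hω')
      have h3 := abs_le.mp (hCy ω' hω')
      have hax : -(|a| * Cx) ≤ a * V x ω' := by
        rw [abs_of_nonneg ha]
        nlinarith [abs_le.mp (hCx ω' hω'), abs_nonneg (V x ω')]
      have hby : -(|b| * Cy) ≤ b * V y ω' := by
        rw [abs_of_nonneg hb]
        nlinarith [abs_le.mp (hCy ω' hω'), abs_nonneg (V y ω')]
      linarith
    · intro ω' hω'
      have em := hBell (a * x + b * y) ω' hω'
      have ex := hBell x ω' hω'
      have ey := hBell y ω' hω'
      have hxA : ω' ⬝ᵥ B + β * ∑ k, ω' k * V x (P k) ≤ V x ω' := by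
        rw [ex]; exact le_max_left _ _
      have hxB : x + β * V x (ω' ᵥ* P) ≤ V x ω' := by
        rw [ex]; exact le_max_right _ _
      have hyA : ω' ⬝ᵥ B + β * ∑ k, ω' k * V y (P k) ≤ V y ω' := by
        rw [ey]; exact le_max_left _ _
      have hyB : y + β * V y (ω' ᵥ* P) ≤ V y ω' := by
        rw [ey]; exact le_max_right _ _
      have hsum : ∑ k, ω' k * (V (a * x + b * y) (P k) - (a * V x (P k) + b * V y (P k)))
          = ∑ k, ω' k * V (a * x + b * y) (P k)
            - (a * ∑ k, ω' k * V x (P k) + b * ∑ k, ω' k * V y (P k)) := by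
        rw [Finset.mul_sum, Finset.mul_sum, ← Finset.sum_add_distrib,
          ← Finset.sum_sub_distrib]
        exact Finset.sum_congr rfl fun k _ => by ring
      have hsum' : β * ∑ k, ω' k * (V (a * x + b * y) (P k) - (a * V x (P k) + b * V y (P k)))
          = β * ∑ k, ω' k * V (a * x + b * y) (P k)
            - (a * (β * ∑ k, ω' k * V x (P k)) + b * (β * ∑ k, ω' k * V y (P k))) := by
        rw [hsum]; ring
      have hXl := le_max_left
        (β * ∑ k, ω' k * (V (a * x + b * y) (P k) - (a * V x (P k) + b * V y (P k))))
        (0 + β * (V (a * x + b * y) (ω' ᵥ* P) - (a * V x (ω' ᵥ* P) + b * V y (ω' ᵥ* P))))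
      have hYr := le_max_right
        (β * ∑ k, ω' k * (V (a * x + b * y) (P k) - (a * V x (P k) + b * V y (P k))))
        (0 + β * (V (a * x + b * y) (ω' ᵥ* P) - (a * V x (ω' ᵥ* P) + b * V y (ω' ᵥ* P))))
      rw [em, sub_le_iff_le_add]
      have haxA := mul_le_mul_of_nonneg_left hxA ha
      have hbyA := mul_le_mul_of_nonneg_left hyA hb
      have haxB := mul_le_mul_of_nonneg_left hxB ha
      have hbyB := mul_le_mul_of_nonneg_left hyB hb
      have hd : a * (ω' ⬝ᵥ B) + b * (ω' ⬝ᵥ B) = ω' ⬝ᵥ B := by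
        rw [← add_mul, hab, one_mul]
      refine max_le ?_ ?_
      · linarith [hsum', hXl, haxA, hbyA, hd]
      · linarith [hYr, haxB, hbyB]
  · -- Monotone
    intro m₁ m₂ hm
    have := hdiff m₁ m₂ ω hω
    have hmax : max 0 (m₁ - m₂) = 0 := max_eq_left (by linarith)
    rw [hmax, zero_div] at this
    simpa using by linarith
  · -- Lipschitz
    intro m₁ m₂
    have h1 := hdiff m₁ m₂ ω hω
    have h2 := hdiff m₂ m₁ ω hω
    have hb1 : max 0 (m₁ - m₂) ≤ |m₁ - m₂| := by
      apply max_le (abs_nonneg _) (le_abs_self _)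
    have hb2 : max 0 (m₂ - m₁) ≤ |m₁ - m₂| := by
      rw [abs_sub_comm]
      exact max_le (abs_nonneg _) (le_abs_self _)
    rw [abs_sub_le_iff]
    constructor
    · exact h1.trans (div_le_div_of_nonneg_right hb1 h1β.le |>.trans_eq rfl)
    · exact h2.trans (div_le_div_of_nonneg_right hb2 h1β.le |>.trans_eq rfl)
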